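/- (Proposition: individual rationality reduces to the lowest type.) Suppose the menu (r_θ, p_θ)_{θ∈Θ} is incentive compatible and ∫_Θ V_θ(r_θ, p_θ) dμ ≥ 0. Then the menu is individually rational if and only if the lowest type participates, i.e. U_{θ̲}(r_{θ̲}, p_{θ̲}) ≥ U_{θ̲}⁰. -/

import Mathlib

open MeasureTheory

/-- The agent's Yaari dual utility: `U_θ(r, p) = -p - ∫₀^{L̄} (1 - g_θ(F_θ(l))) r(l) dl`. -/
noncomputable def Uag (g F : ℝ → ℝ → ℝ) (Lbar θ : ℝ) (rr : ℝ → ℝ) (pp : ℝ) : ℝ :=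
  -pp - ∫ l in (0 : ℝ)..Lbar, (1 - g θ (F θ l)) * rr l

/-- The agent's no-insurance utility: `U_θ⁰ = -∫₀^{L̄} (1 - g_θ(F_θ(l))) dl`. -/
noncomputable def U0 (g F : ℝ → ℝ → ℝ) (Lbar θ : ℝ) : ℝ :=
  -∫ l in (0 : ℝ)..Lbar, (1 - g θ (F θ l))

/-- The insurer's Yaari dual utility:
`V_θ(r, p) = p - ∫₀^{L̄} (1 - g^In(F_θ(l))) (1 - r(l)) dl`. -/
noncomputable def Vin (gIn : ℝ → ℝ) (F : ℝ → ℝ → ℝ) (Lbar θ : ℝ) (rr : ℝ → ℝ) (pp : ℝ) : ℝ :=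
  pp - ∫ l in (0 : ℝ)..Lbar, (1 - gIn (F θ l)) * (1 - rr l)

/-- **Individual rationality reduces to the lowest type.** For an incentive-compatible menu
with nonnegative aggregate insurer utility, the menu is individually rational iff the lowest
type participates. -/
theorem IR_iff_lowest_type_participates
    (θlow θhigh Lbar : ℝ) (hθ : θlow < θhigh) (hL : 0 < Lbar)
    (g : ℝ → ℝ → ℝ) (gIn : ℝ → ℝ) (F : ℝ → ℝ → ℝ)
    (hg_mono : ∀ θ ∈ Set.Icc θlow θhigh, MonotoneOn (g θ) (Set.Icc (0 : ℝ) 1))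
    (hg0 : ∀ θ ∈ Set.Icc θlow θhigh, g θ 0 = 0)
    (hg1 : ∀ θ ∈ Set.Icc θlow θhigh, g θ 1 = 1)
    (hg_range : ∀ θ ∈ Set.Icc θlow θhigh, ∀ t ∈ Set.Icc (0 : ℝ) 1,
      g θ t ∈ Set.Icc (0 : ℝ) 1)
    (hgIn_mono : MonotoneOn gIn (Set.Icc (0 : ℝ) 1))
    (hgIn0 : gIn 0 = 0) (hgIn1 : gIn 1 = 1)
    (hgIn_range : ∀ t ∈ Set.Icc (0 : ℝ) 1, gIn t ∈ Set.Icc (0 : ℝ) 1)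
    (hF_range : ∀ θ ∈ Set.Icc θlow θhigh, ∀ l ∈ Set.Icc (0 : ℝ) Lbar,
      F θ l ∈ Set.Icc (0 : ℝ) 1)
    (hgF_meas : Measurable fun x : ℝ × ℝ => g x.1 (F x.1 x.2))
    (hgInF_meas : Measurable fun x : ℝ × ℝ => gIn (F x.1 x.2))
    (r : ℝ → ℝ → ℝ) (p : ℝ → ℝ)
    (hr_meas : Measurable (Function.uncurry r)) (hp_meas : Measurable p)
    (hr_range : ∀ θ ∈ Set.Icc θlow θhigh, ∀ l ∈ Set.Icc (0 : ℝ) Lbar,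
      r θ l ∈ Set.Icc (0 : ℝ) 1)
    (q : ℝ → ℝ) (hq_nonneg : ∀ θ, 0 ≤ q θ) (hq_meas : Measurable q)
    (hq_int : (∫ θ in θlow..θhigh, q θ) = 1)
    (D : ℝ → ℝ → ℝ)
    (hD : ∀ l ∈ Set.Icc (0 : ℝ) Lbar, ∀ s ∈ Set.Icc θlow θhigh,
      HasDerivWithinAt (fun t => g t (F t l)) (D s l) (Set.Icc θlow θhigh) s)
    (hLip : ∃ C : NNReal, ∀ l ∈ Set.Icc (0 : ℝ) Lbar,
      LipschitzOnWith C (fun s => g s (F s l)) (Set.Icc θlow θhigh))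
    (hD_meas : Measurable (Function.uncurry D))
    (hD_nonpos : ∀ s ∈ Set.Icc θlow θhigh, ∀ l ∈ Set.Icc (0 : ℝ) Lbar, D s l ≤ 0)
    -- incentive compatibility
    (hIC : ∀ θ ∈ Set.Icc θlow θhigh, ∀ θ' ∈ Set.Icc θlow θhigh,
      Uag g F Lbar θ (r θ') (p θ') ≤ Uag g F Lbar θ (r θ) (p θ))
    -- nonnegative aggregate insurer utility
    (hV : 0 ≤ ∫ θ in θlow..θhigh, Vin gIn F Lbar θ (r θ) (p θ) * q θ) :
    (∀ θ ∈ Set.Icc θlow θhigh, U0 g F Lbar θ ≤ Uag g F Lbar θ (r θ) (p θ)) ↔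
      U0 g F Lbar θlow ≤ Uag g F Lbar θlow (r θlow) (p θlow) := by
  
  have hlow : θlow ∈ Set.Icc θlow θhigh := ⟨le_refl _, hθ.le⟩
  constructor
  · intro h; exact h θlow hlow
  intro h0 θ hθmem
  -- antitonicity of s ↦ g s (F s l)
  have hanti : ∀ l ∈ Set.Icc (0:ℝ) Lbar, g θ (F θ l) ≤ g θlow (F θlow l) := by
    intro l hl
    have hA : AntitoneOn (fun s => g s (F s l)) (Set.Icc θlow θhigh) := by
      apply antitoneOn_of_hasDerivWithinAt_nonpos (convex_Icc _ _)
        (fun s hs => (hD l hl s hs).continuousWithinAt)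
        (f' := fun s => D s l)
        (fun x hx => ((hD l hl x (interior_subset hx)).mono interior_subset))
        (fun x hx => hD_nonpos x (interior_subset hx) l hl)
    exact hA hlow hθmem hθmem.1
  -- measurability helpers
  have meas_g : ∀ s : ℝ, Measurable fun l => g s (F s l) := fun s =>
    hgF_meas.comp (measurable_const.prodMk measurable_id)
  have meas_r : ∀ s : ℝ, Measurable fun l => r s l := fun s =>
    hr_meas.comp (measurable_const.prodMk measurable_id)
  -- integrability helper
  have intable : ∀ f : ℝ → ℝ, Measurable f → (∀ l ∈ Set.Icc (0:ℝ) Lbar, |f l| ≤ 2) →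
      IntervalIntegrable f MeasureTheory.volume 0 Lbar := by
    intro f hf hb
    rw [intervalIntegrable_iff_integrableOn_Ioc_of_le hL.le]
    apply MeasureTheory.Integrable.mono' (g := fun _ => (2:ℝ))
      (MeasureTheory.integrableOn_const measure_Ioc_lt_top.ne)
      hf.aestronglyMeasurable
    rw [MeasureTheory.ae_restrict_iff' measurableSet_Ioc]
    filter_upwards with l hl
    exact hb l ⟨hl.1.le, hl.2⟩
  -- pointwise bounds
  have hg_bd : ∀ s ∈ Set.Icc θlow θhigh, ∀ l ∈ Set.Icc (0:ℝ) Lbar,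
      g s (F s l) ∈ Set.Icc (0:ℝ) 1 := fun s hs l hl =>
    hg_range s hs _ (hF_range s hs l hl)
  have hbd1 : ∀ s ∈ Set.Icc θlow θhigh, ∀ s' ∈ Set.Icc θlow θhigh,
      ∀ l ∈ Set.Icc (0:ℝ) Lbar, |(1 - g s (F s l)) * (1 - r s' l)| ≤ 2 := by
    intro s hs s' hs' l hl
    have h1 := hg_bd s hs l hl
    have h2 := hr_range s' hs' l hl
    rw [abs_mul]
    have : |1 - g s (F s l)| ≤ 1 := by rw [abs_le]; constructor <;> [linarith [h1.2]; linarith [h1.1]]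
    have h2' : |1 - r s' l| ≤ 1 := by rw [abs_le]; constructor <;> [linarith [h2.2]; linarith [h2.1]]
    nlinarith [abs_nonneg (1 - g s (F s l)), abs_nonneg (1 - r s' l)]
  have int1 : ∀ s ∈ Set.Icc θlow θhigh, ∀ s' ∈ Set.Icc θlow θhigh,
      IntervalIntegrable (fun l => (1 - g s (F s l)) * (1 - r s' l))
        MeasureTheory.volume 0 Lbar := by
    intro s hs s' hs'
    exact intable _ (((measurable_const.sub (meas_g s))).mul
      (measurable_const.sub (meas_r s'))) (hbd1 s hs s' hs')
  have int_g : ∀ s ∈ Set.Icc θlow θhigh,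
      IntervalIntegrable (fun l => 1 - g s (F s l)) MeasureTheory.volume 0 Lbar := by
    intro s hs
    refine intable _ (measurable_const.sub (meas_g s)) (fun l hl => ?_)
    have h1 := hg_bd s hs l hl
    rw [abs_le]; constructor <;> [linarith [h1.2]; linarith [h1.1]]
  have int_gr : ∀ s ∈ Set.Icc θlow θhigh, ∀ s' ∈ Set.Icc θlow θhigh,
      IntervalIntegrable (fun l => (1 - g s (F s l)) * r s' l) MeasureTheory.volume 0 Lbar := by
    intro s hs s' hs''
    refine intable _ ((measurable_const.sub (meas_g s)).mul (meas_r s')) (fun l hl => ?_)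
    have h1 := hg_bd s hs l hl
    rw [abs_mul]
    have hb1 : |1 - g s (F s l)| ≤ 1 := by
      rw [abs_le]; constructor <;> [linarith [h1.2]; linarith [h1.1]]
    have h2 := hr_range s' hs'' l hl
    have hb2 : |r s' l| ≤ 1 := by rw [abs_le]; exact ⟨by linarith [h2.1], h2.2⟩
    nlinarith [abs_nonneg (1 - g s (F s l)), abs_nonneg (r s' l)]
  -- key identity
  have key : ∀ s ∈ Set.Icc θlow θhigh, ∀ s' ∈ Set.Icc θlow θhigh,
      Uag g F Lbar s (r s') (p s') - U0 g F Lbar s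
        = -p s' + ∫ l in (0:ℝ)..Lbar, (1 - g s (F s l)) * (1 - r s' l) := by
    intro s hs s' hs'
    have heq : (∫ l in (0:ℝ)..Lbar, (1 - g s (F s l)) * (1 - r s' l))
        = (∫ l in (0:ℝ)..Lbar, (1 - g s (F s l)))
          - ∫ l in (0:ℝ)..Lbar, (1 - g s (F s l)) * r s' l := by
      rw [← intervalIntegral.integral_sub (int_g s hs) (int_gr s hs s' hs')]
      apply intervalIntegral.integral_congr
      intro l _; ring
    simp only [Uag, U0]
    rw [heq]; ring
  -- monotone comparison of integrals
  have mono_int : (∫ l in (0:ℝ)..Lbar, (1 - g θlow (F θlow l)) * (1 - r θlow l))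
      ≤ ∫ l in (0:ℝ)..Lbar, (1 - g θ (F θ l)) * (1 - r θlow l) := by
    apply intervalIntegral.integral_mono_on hL.le (int1 θlow hlow θlow hlow)
      (int1 θ hθmem θlow hlow)
    intro l hl
    have hr := hr_range θlow hlow l hl
    exact mul_le_mul_of_nonneg_right (by linarith [hanti l hl]) (by linarith [hr.2])
  have h1 := key θ hθmem θlow hlow
  have h2 := key θlow hlow θlow hlow
  have h3 := hIC θ hθmem θlow hlow
  linarith
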